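/- arXiv:1205.5779 — 2 statements merged into one kernel-verified Lean document; each statement's English description precedes it below -/
import Mathlib

section
/- A set Q of quartets over a label set L is compatible if and only if the corresponding set of characters C_Q = {χ_q : q ∈ Q} is compatible, where for q = ab|cd the character χ_q is the partition of L with one block {a,b}, one block {c,d}, and a singleton block {ℓ} for each ℓ ∈ L \ {a,b,c,d}. -/
open SimpleGraph

universe u

/-- A quartet `xy|zw`: an unordered pair of unordered pairs of labels. -/
def quartet {L : Type u} (x y z w : L) : Sym2 (Sym2 L) := s(s(x, y), s(z, w))

/-- `q` is a genuine quartet: four pairwise distinct labels. -/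
def IsQuartet {L : Type u} (q : Sym2 (Sym2 L)) : Prop :=
  ∃ x y z w : L, x ≠ y ∧ x ≠ z ∧ x ≠ w ∧ y ≠ z ∧ y ≠ w ∧ z ≠ w ∧ q = quartet x y z w

/-- The label set `L(Q)` of a set of quartets. -/
def qLabelSet {L : Type u} (Q : Set (Sym2 (Sym2 L))) : Set L :=
  {x | ∃ q ∈ Q, ∃ p, p ∈ q ∧ x ∈ p}

/-- An unrooted phylogenetic tree whose leaves are in bijection with the label set `S`:
a finite tree with no degree-2 vertex, whose degree-1 vertices are exactly the labeled ones. -/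
structure UTree (L : Type u) (S : Set L) where
  V : Type
  fV : Fintype V
  G : SimpleGraph V
  isTree : G.IsTree
  label : S → V
  labelInj : Function.Injective label
  leafIff : ∀ v : V, (∃ l : S, label l = v) ↔ (G.neighborSet v).ncard = 1
  noDeg2 : ∀ v : V, (G.neighborSet v).ncard ≠ 2

/-- `T` displays the quartet `xy|zw`: the path between the leaves labeled `x` and `y`
is vertex-disjoint from the path between the leaves labeled `z` and `w`. -/
def UTree.displays4 {L : Type u} {S : Set L} (T : UTree L S) (x y z w : L) : Prop :=
  ∃ (hx : x ∈ S) (hy : y ∈ S) (hz : z ∈ S) (hw : w ∈ S)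
    (p : T.G.Walk (T.label ⟨x, hx⟩) (T.label ⟨y, hy⟩))
    (p' : T.G.Walk (T.label ⟨z, hz⟩) (T.label ⟨w, hw⟩)),
    p.IsPath ∧ p'.IsPath ∧ ∀ v, v ∈ p.support → v ∉ p'.support

def UTree.displays {L : Type u} {S : Set L} (T : UTree L S) (q : Sym2 (Sym2 L)) : Prop :=
  ∀ x y z w : L, q = quartet x y z w → T.displays4 x y z w

/-- A set of quartets is compatible over label set `S` if a single tree displays all of them. -/
def QCompat {L : Type u} (S : Set L) (Q : Set (Sym2 (Sym2 L))) : Prop :=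
  ∃ T : UTree L S, ∀ q ∈ Q, T.displays q

/-- `χ` is a partition of the label set `S` (a character on `S`). -/
def IsPartitionOn {L : Type u} (S : Set L) (χ : Set (Set L)) : Prop :=
  (∀ B ∈ χ, B.Nonempty ∧ B ⊆ S) ∧ ∀ x ∈ S, ∃! B, B ∈ χ ∧ x ∈ B

/-- The vertex set of the minimal subtree of `T` spanning the leaves labeled by `B`. -/
def UTree.span {L : Type u} {S : Set L} (T : UTree L S) (B : Set L) : Set T.V :=
  {v | ∃ (x y : L) (hx : x ∈ S) (hy : y ∈ S), x ∈ B ∧ y ∈ B ∧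
    ∃ p : T.G.Walk (T.label ⟨x, hx⟩) (T.label ⟨y, hy⟩), p.IsPath ∧ v ∈ p.support}

/-- The character `χ` is convex on `T`: spanning subtrees of distinct blocks are disjoint. -/
def UTree.convexOn {L : Type u} {S : Set L} (T : UTree L S) (χ : Set (Set L)) : Prop :=
  ∀ B ∈ χ, ∀ B' ∈ χ, B ≠ B' → ∀ v ∈ T.span B, v ∉ T.span B'

/-- A set of characters is compatible over `S` if a single tree makes all of them convex. -/
def CCompat {L : Type u} (S : Set L) (C : Set (Set (Set L))) : Prop :=
  ∃ T : UTree L S, ∀ χ ∈ C, T.convexOn χ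

/-- The character `χ_q` corresponding to the quartet `xy|zw`:
blocks `{x,y}`, `{z,w}` and a singleton for every other label of `S`. -/
def chiQ {L : Type u} (S : Set L) (x y z w : L) : Set (Set L) :=
  {{x, y}, {z, w}} ∪ {B | ∃ l ∈ S, l ≠ x ∧ l ≠ y ∧ l ≠ z ∧ l ≠ w ∧ B = {l}}

/-- The set of characters corresponding to a set of quartets. -/
def CQ {L : Type u} (S : Set L) (Q : Set (Sym2 (Sym2 L))) : Set (Set (Set L)) :=
  {χ | ∃ q ∈ Q, ∃ x y z w : L, q = quartet x y z w ∧ χ = chiQ S x y z w}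

/-- A rooted phylogenetic tree on label set `S`. -/
structure RTree (L : Type u) (S : Set L) where
  V : Type
  fV : Fintype V
  G : SimpleGraph V
  isTree : G.IsTree
  root : V
  label : S → V
  labelInj : Function.Injective label
  leafIff : ∀ v : V, (∃ l : S, label l = v) ↔ ((G.neighborSet v).ncard = 1 ∧ v ≠ root)
  noDeg2 : ∀ v : V, v ≠ root → (G.neighborSet v).ncard ≠ 2

/-- `u` is an ancestor of `v`: `u` lies on the path from the root to `v`. -/
def RTree.anc {L : Type u} {S : Set L} (T : RTree L S) (u v : T.V) : Prop :=
  ∃ p : T.G.Walk T.root v, p.IsPath ∧ u ∈ p.support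

/-- `m` is the most recent common ancestor of the set `A` of vertices. -/
def RTree.isMRCA {L : Type u} {S : Set L} (T : RTree L S) (A : Set T.V) (m : T.V) : Prop :=
  (∀ v ∈ A, T.anc m v) ∧ ∀ w, (∀ v ∈ A, T.anc w v) → T.anc w m

/-- `T` displays the rooted triplet `ab|c`: the MRCA of `{a,b}` is a proper
descendant of the MRCA of `{a,b,c}`. -/
def RTree.displays3 {L : Type u} {S : Set L} (T : RTree L S) (a b c : L) : Prop :=
  ∃ (ha : a ∈ S) (hb : b ∈ S) (hc : c ∈ S) (m M : T.V),
    T.isMRCA {T.label ⟨a, ha⟩, T.label ⟨b, hb⟩} m ∧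
    T.isMRCA {T.label ⟨a, ha⟩, T.label ⟨b, hb⟩, T.label ⟨c, hc⟩} M ∧
    T.anc M m ∧ M ≠ m

/-- A rooted triplet `ab|c` is encoded as the pair `(s(a,b), c)`. -/
def RTree.displays {L : Type u} {S : Set L} (T : RTree L S) (t : Sym2 L × L) : Prop :=
  ∀ a b c : L, t = (s(a, b), c) → T.displays3 a b c

def IsTriplet {L : Type u} (t : Sym2 L × L) : Prop :=
  ∃ a b c : L, a ≠ b ∧ a ≠ c ∧ b ≠ c ∧ t = (s(a, b), c)

/-- The label set `L(R)` of a set of rooted triplets. -/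
def tLabelSet {L : Type u} (R : Set (Sym2 L × L)) : Set L :=
  {x | ∃ t ∈ R, x ∈ t.1 ∨ x = t.2}

/-- A set of rooted triplets is compatible if one rooted tree displays all of them. -/
def RCompat {L : Type u} (S : Set L) (R : Set (Sym2 L × L)) : Prop :=
  ∃ T : RTree L S, ∀ t ∈ R, T.displays t

/-- The graph `[R,S]`: vertices `S`, with an edge `{a,b}` whenever `ab|c ∈ R` for some `c ∈ S`. -/
def tripGraph {L : Type u} (R : Set (Sym2 L × L)) (S : Set L) : SimpleGraph L where
  Adj x y := x ≠ y ∧ x ∈ S ∧ y ∈ S ∧ ∃ c ∈ S, (s(x, y), c) ∈ R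
  symm := ⟨by
    rintro x y ⟨hxy, hx, hy, c, hc, hR⟩
    exact ⟨hxy.symm, hy, hx, c, hc, by rwa [Sym2.eq_swap]⟩⟩
  loopless := ⟨by rintro x ⟨hx, -⟩; exact hx rfl⟩

/-- The label set `L_{s,t} = {a_1,…,a_s, b_1,…,b_t}`, with `a_i = inl i` and `b_j = inr j`. -/
def Lst (s t : ℕ) : Set (ℕ ⊕ ℕ) := (Sum.inl '' Set.Icc 1 s) ∪ (Sum.inr '' Set.Icc 1 t)

/-- The quartet set `Q_{s,t} = {a_1b_1|a_sb_t} ∪ {a_i a_{i+1} | b_j b_{j+1} : 1 ≤ i < s, 1 ≤ j < t}`. -/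
def Qst (s t : ℕ) : Finset (Sym2 (Sym2 (ℕ ⊕ ℕ))) :=
  insert (quartet (Sum.inl 1) (Sum.inr 1) (Sum.inl s) (Sum.inr t))
    ((Finset.Ico 1 s ×ˢ Finset.Ico 1 t).image
      (fun p => quartet (Sum.inl p.1) (Sum.inl (p.1 + 1)) (Sum.inr p.2) (Sum.inr (p.2 + 1))))


section Aux

variable {L : Type} {S : Set L}

/-- An internal vertex of a path has two distinct neighbors. -/
private lemma two_neighbors {V : Type} {G : SimpleGraph V} {a b v : V}
    (p : G.Walk a b) (hp : p.IsPath) (hv : v ∈ p.support) (hva : v ≠ a) (hvb : v ≠ b) :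
    ∃ u1 u2, u1 ≠ u2 ∧ u1 ∈ G.neighborSet v ∧ u2 ∈ G.neighborSet v := by
  classical
  have hspec := p.take_spec hv
  have hnodup : ((p.takeUntil v hv).support ++ (p.dropUntil v hv).support.tail).Nodup := by
    rw [← Walk.support_append, hspec]; exact hp.support_nodup
  obtain ⟨u2, hadj2, e', he'⟩ := Walk.exists_eq_cons_of_ne hvb (p.dropUntil v hv)
  obtain ⟨u1, hadj1, d', hd'⟩ := Walk.exists_eq_cons_of_ne hva (p.takeUntil v hv).reverse
  have hu1 : u1 ∈ (p.takeUntil v hv).support := by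
    have : u1 ∈ (p.takeUntil v hv).reverse.support := by
      rw [hd']; simp [Walk.support_cons]
    rwa [Walk.support_reverse, List.mem_reverse] at this
  have hu2 : u2 ∈ (p.dropUntil v hv).support.tail := by
    rw [he']; simp [Walk.support_cons]
  have hdisj := (List.nodup_append'.mp hnodup).2.2
  refine ⟨u1, u2, ?_, hadj1, hadj2⟩
  intro h; subst h; exact hdisj hu1 hu2

/-- A leaf label not equal to the endpoints is not on a path. -/
private lemma label_not_internal (T : UTree L S) {l : L} (hl : l ∈ S)
    {a b : T.V} (p : T.G.Walk a b) (hp : p.IsPath) (ha : T.label ⟨l, hl⟩ ≠ a)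
    (hb : T.label ⟨l, hl⟩ ≠ b) : T.label ⟨l, hl⟩ ∉ p.support := by
  intro hmem
  obtain ⟨u1, u2, hne, h1, h2⟩ := two_neighbors p hp hmem ha hb
  have hdeg := (T.leafIff _).mp ⟨⟨l, hl⟩, rfl⟩
  obtain ⟨u, hu⟩ := Set.ncard_eq_one.mp hdeg
  rw [hu] at h1 h2
  simp only [Set.mem_singleton_iff] at h1 h2
  exact hne (h1.trans h2.symm)

private lemma span_pair_subset (T : UTree L S) {a b : L}
    (ha : a ∈ S) (hb : b ∈ S) (p : T.G.Walk (T.label ⟨a, ha⟩) (T.label ⟨b, hb⟩))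
    (hp : p.IsPath) : ∀ v ∈ T.span {a, b}, v ∈ p.support := by
  have huniq := T.isTree.existsUnique_path
  rintro v ⟨x, y, hx, hy, hxB, hyB, r, hr, hvr⟩
  simp only [Set.mem_insert_iff, Set.mem_singleton_iff] at hxB hyB
  rcases hxB with rfl | rfl <;> rcases hyB with rfl | rfl
  · have : r = Walk.nil := (huniq _ _).unique hr Walk.IsPath.nil
    rw [this] at hvr; simp only [Walk.support_nil, List.mem_singleton] at hvr
    rw [hvr]; exact Walk.start_mem_support p
  · have : r = p := (huniq _ _).unique hr hp
    rwa [this] at hvr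
  · have : r = p.reverse := (huniq _ _).unique hr hp.reverse
    rw [this, Walk.support_reverse, List.mem_reverse] at hvr; exact hvr
  · have : r = Walk.nil := (huniq _ _).unique hr Walk.IsPath.nil
    rw [this] at hvr; simp only [Walk.support_nil, List.mem_singleton] at hvr
    rw [hvr]; exact Walk.end_mem_support p

private lemma span_singleton_subset (T : UTree L S) {l : L} (hl : l ∈ S) :
    T.span {l} ⊆ {T.label ⟨l, hl⟩} := by
  have huniq := T.isTree.existsUnique_path
  rintro v ⟨x, y, hx, hy, hxB, hyB, r, hr, hvr⟩
  simp only [Set.mem_singleton_iff] at hxB hyB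
  subst hxB; subst hyB
  have : r = Walk.nil := (huniq _ _).unique hr Walk.IsPath.nil
  rw [this] at hvr; simp only [Walk.support_nil, List.mem_singleton] at hvr
  simp [hvr]

private lemma quartet_distinct {q : Sym2 (Sym2 L)} (hq : IsQuartet q) {x y z w : L}
    (h : q = quartet x y z w) :
    x ≠ y ∧ x ≠ z ∧ x ≠ w ∧ y ≠ z ∧ y ≠ w ∧ z ≠ w := by
  obtain ⟨a, b, c, d, hab, hac, had, hbc, hbd, hcd, rfl⟩ := hq
  unfold quartet at h
  rw [Sym2.eq_iff] at h
  rcases h with ⟨h1, h2⟩ | ⟨h1, h2⟩ <;> rw [Sym2.eq_iff] at h1 h2 <;>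
    rcases h1 with ⟨rfl, rfl⟩ | ⟨rfl, rfl⟩ <;> rcases h2 with ⟨rfl, rfl⟩ | ⟨rfl, rfl⟩ <;>
    refine ⟨?_, ?_, ?_, ?_, ?_, ?_⟩ <;> first | assumption | (apply Ne.symm; assumption)

private lemma mem_qLabelSet {Q : Set (Sym2 (Sym2 L))} {q : Sym2 (Sym2 L)} (hq : q ∈ Q)
    {x y z w : L} (h : q = quartet x y z w) :
    x ∈ qLabelSet Q ∧ y ∈ qLabelSet Q ∧ z ∈ qLabelSet Q ∧ w ∈ qLabelSet Q := by
  refine ⟨⟨q, hq, s(x, y), ?_, ?_⟩, ⟨q, hq, s(x, y), ?_, ?_⟩,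
    ⟨q, hq, s(z, w), ?_, ?_⟩, ⟨q, hq, s(z, w), ?_, ?_⟩⟩ <;> simp [h, quartet]

end Aux

/-- a set `Q` of quartets is compatible iff the corresponding set of
characters `C_Q` is compatible. -/
theorem quartets_compat_iff_chars_compat {L : Type} (Q : Set (Sym2 (Sym2 L)))
    (hQ : ∀ q ∈ Q, IsQuartet q) :
    QCompat (qLabelSet Q) Q ↔ CCompat (qLabelSet Q) (CQ (qLabelSet Q) Q) := by
  set S := qLabelSet Q with hS
  constructor
  · rintro ⟨T, hT⟩
    refine ⟨T, ?_⟩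
    rintro χ ⟨q, hqQ, x, y, z, w, hq, rfl⟩
    obtain ⟨hx, hy, hz, hw, p, p', hp, hp', hdisj⟩ := hT q hqQ x y z w hq
    intro B hB B' hB' hne v hvB hvB'
    simp only [chiQ, Set.mem_union, Set.mem_insert_iff, Set.mem_singleton_iff,
      Set.mem_setOf_eq] at hB hB'
    have hsxy := span_pair_subset T hx hy p hp
    have hszw := span_pair_subset T hz hw p' hp'
    have hlab : ∀ (l : L) (hl : l ∈ S), l ≠ x → l ≠ y →
        T.label ⟨l, hl⟩ ∉ p.support := by
      intro l hl h1 h2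
      refine label_not_internal T hl p hp ?_ ?_ <;>
        · intro h; have := Subtype.ext_iff.mp (T.labelInj h); simp at this; tauto
    have hlab' : ∀ (l : L) (hl : l ∈ S), l ≠ z → l ≠ w →
        T.label ⟨l, hl⟩ ∉ p'.support := by
      intro l hl h1 h2
      refine label_not_internal T hl p' hp' ?_ ?_ <;>
        · intro h; have := Subtype.ext_iff.mp (T.labelInj h); simp at this; tauto
    rcases hB with (rfl | rfl) | ⟨l, hl, hlx, hly, hlz, hlw, rfl⟩ <;>
      rcases hB' with (rfl | rfl) | ⟨l', hl', hl'x, hl'y, hl'z, hl'w, rfl⟩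
    · exact hne rfl
    · exact hdisj v (hsxy v hvB) (hszw v hvB')
    · have h1 := span_singleton_subset T hl' hvB'
      simp only [Set.mem_singleton_iff] at h1
      exact hlab l' hl' hl'x hl'y (h1 ▸ hsxy v hvB)
    · exact hdisj v (hsxy v hvB') (hszw v hvB)
    · exact hne rfl
    · have h1 := span_singleton_subset T hl' hvB'
      simp only [Set.mem_singleton_iff] at h1
      exact hlab' l' hl' hl'z hl'w (h1 ▸ hszw v hvB)
    · have h1 := span_singleton_subset T hl hvB
      simp only [Set.mem_singleton_iff] at h1
      exact hlab l hl hlx hly (h1 ▸ hsxy v hvB')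
    · have h1 := span_singleton_subset T hl hvB
      simp only [Set.mem_singleton_iff] at h1
      exact hlab' l hl hlz hlw (h1 ▸ hszw v hvB')
    · have h1 := span_singleton_subset T hl hvB
      have h2 := span_singleton_subset T hl' hvB'
      simp only [Set.mem_singleton_iff] at h1 h2
      have : l = l' := by
        have := Subtype.ext_iff.mp (T.labelInj (h1 ▸ h2 : T.label ⟨l, hl⟩ = T.label ⟨l', hl'⟩))
        simpa using this
      subst this; exact hne rfl
  · rintro ⟨T, hT⟩
    refine ⟨T, ?_⟩
    intro q hqQ x y z w hq
    have hχ : chiQ S x y z w ∈ CQ S Q := ⟨q, hqQ, x, y, z, w, hq, rfl⟩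
    have hconv := hT _ hχ
    obtain ⟨hx, hy, hz, hw⟩ := mem_qLabelSet hqQ hq
    obtain ⟨-, hxz, hxw, -, -, -⟩ := quartet_distinct (hQ q hqQ) hq
    have hne : ({x, y} : Set L) ≠ {z, w} := by
      intro h
      have : x ∈ ({z, w} : Set L) := h ▸ (by simp)
      simp only [Set.mem_insert_iff, Set.mem_singleton_iff] at this
      tauto
    have huniq := T.isTree.existsUnique_path
    obtain ⟨p, hp⟩ := (huniq (T.label ⟨x, hx⟩) (T.label ⟨y, hy⟩)).exists
    obtain ⟨p', hp'⟩ := (huniq (T.label ⟨z, hz⟩) (T.label ⟨w, hw⟩)).exists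
    refine ⟨hx, hy, hz, hw, p, p', hp, hp', ?_⟩
    intro v hv hv'
    have h1 : v ∈ T.span {x, y} := ⟨x, y, hx, hy, by simp, by simp, p, hp, hv⟩
    have h2 : v ∈ T.span {z, w} := ⟨z, w, hz, hw, by simp, by simp, p', hp', hv'⟩
    exact hconv {x, y} (by simp [chiQ]) {z, w} (by simp [chiQ]) hne v h1 h2
end

section
/- For all integers s, t ≥ 2, the quartet set Q_{s,t} is incompatible: no unrooted phylogenetic tree on the label set L_{s,t} displays all quartets in Q_{s,t}. -/
open SimpleGraph

universe u

section Helpers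

variable {V : Type} {G : SimpleGraph V} [DecidableEq V]

lemma path_supp_subset (hG : G.IsAcyclic) {u v : V} (p q : G.Walk u v)
    (hp : p.IsPath) : p.support ⊆ q.support := by
  have h : (⟨p, hp⟩ : G.Path u v) = ⟨q.bypass, q.bypass_isPath⟩ := hG.path_unique _ _
  have h2 : p = q.bypass := congrArg Subtype.val h
  rw [h2]; exact q.support_bypass_subset

lemma exists_boundary {A B : V → Prop} (hd : ∀ x, A x → B x → False) :
    ∀ {a b : V} (p : G.Walk a b), (∀ v ∈ p.support, A v ∨ B v) → A a → B b →
      ∃ u v, G.Adj u v ∧ A u ∧ B v := by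
  intro a b p
  induction p with
  | nil => exact fun _ ha hb => absurd hb (fun hb => hd _ ha hb)
  | @cons a c b h q ih =>
    intro hsup ha hb
    rcases hsup c (by simp) with hc | hc
    · exact ih (fun v hv => hsup v (by simp [hv])) hc hb
    · exact ⟨a, c, h, ha, hc⟩

lemma exists_segment {a b c d : V} (p : G.Walk a b) (hp : p.IsPath)
    (hc : c ∈ p.support) (hd : d ∈ p.support) :
    ∃ q : G.Walk c d, q.IsPath ∧ q.support ⊆ p.support := by
  by_cases h : d ∈ (p.takeUntil c hc).support
  · refine ⟨((p.takeUntil c hc).dropUntil d h).reverse,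
      ((hp.takeUntil hc).dropUntil h).reverse, ?_⟩
    intro v hv
    rw [Walk.support_reverse, List.mem_reverse] at hv
    exact p.support_takeUntil_subset hc (Walk.support_dropUntil_subset _ h hv)
  · have hd' : d ∈ (p.dropUntil c hc).support := by
      have h3 : d ∈ ((p.takeUntil c hc).append (p.dropUntil c hc)).support := by
        rw [p.take_spec hc]; exact hd
      rw [Walk.mem_support_append_iff] at h3
      tauto
    exact ⟨(p.dropUntil c hc).takeUntil d hd', (hp.dropUntil hc).takeUntil hd',
      fun v hv => p.support_dropUntil_subset hc (Walk.support_takeUntil_subset _ hd' hv)⟩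

lemma quartet_exclusion (hG : G.IsTree) {x y z w : V}
    (P : G.Walk x y) (Q : G.Walk z w) (R : G.Walk x z) (R' : G.Walk y w)
    (hP : P.IsPath) (hQ : Q.IsPath) (hR : R.IsPath) (hR' : R'.IsPath)
    (hPQ : ∀ v ∈ P.support, v ∉ Q.support)
    (hRR' : ∀ v ∈ R.support, v ∉ R'.support) : False := by
  have hac := hG.IsAcyclic
  -- the path from z to y
  have hS1 : ∀ v ∈ (R.reverse.append P).bypass.support,
      v ∈ R.support ∨ v ∈ P.support := by
    intro v hv
    have h := Walk.support_bypass_subset _ hv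
    rw [Walk.mem_support_append_iff] at h
    rcases h with h | h
    · left; rwa [Walk.support_reverse, List.mem_reverse] at h
    · right; exact h
  have hS2 : ∀ v ∈ (R.reverse.append P).bypass.support,
      v ∈ Q.support ∨ v ∈ R'.support := by
    intro v hv
    have heq : (R.reverse.append P).bypass.support ⊆
        (Q.append R'.reverse).support :=
      path_supp_subset hac _ _ (Walk.bypass_isPath _)
    have h := heq hv
    rw [Walk.mem_support_append_iff] at h
    rcases h with h | h
    · left; exact h
    · right; rwa [Walk.support_reverse, List.mem_reverse] at h
  obtain ⟨u, v, huv, hu, hv⟩ :=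
    exists_boundary (A := fun v => v ∈ R.support ∧ v ∈ Q.support)
      (B := fun v => v ∈ P.support ∧ v ∈ R'.support)
      (fun x hx hy => hRR' x hx.1 hy.2)
      (R.reverse.append P).bypass
      (fun v hv => by
        rcases hS1 v hv with h1 | h1 <;> rcases hS2 v hv with h2 | h2
        · exact Or.inl ⟨h1, h2⟩
        · exact absurd h2 (hRR' v h1)
        · exact ((hPQ v h1) h2).elim
        · exact Or.inr ⟨h1, h2⟩)
      ⟨R.end_mem_support, Q.start_mem_support⟩
      ⟨P.end_mem_support, R'.start_mem_support⟩
  -- the path from x to w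
  have hT1 : ∀ v ∈ (P.append R').bypass.support,
      v ∈ P.support ∨ v ∈ R'.support := by
    intro v hv
    have h := Walk.support_bypass_subset _ hv
    rwa [Walk.mem_support_append_iff] at h
  have hT2 : ∀ v ∈ (P.append R').bypass.support,
      v ∈ R.support ∨ v ∈ Q.support := by
    intro v hv
    have heq : (P.append R').bypass.support ⊆ (R.append Q).support :=
      path_supp_subset hac _ _ (Walk.bypass_isPath _)
    have h := heq hv
    rwa [Walk.mem_support_append_iff] at h
  obtain ⟨u', v', hu'v', hu', hv'⟩ :=
    exists_boundary (A := fun v => v ∈ P.support ∧ v ∈ R.support)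
      (B := fun v => v ∈ Q.support ∧ v ∈ R'.support)
      (fun x hx hy => hPQ x hx.1 hy.1)
      (P.append R').bypass
      (fun v hv => by
        rcases hT1 v hv with h1 | h1 <;> rcases hT2 v hv with h2 | h2
        · exact Or.inl ⟨h1, h2⟩
        · exact absurd h2 (hPQ v h1)
        · exact absurd h1 (hRR' v h2)
        · exact Or.inr ⟨h2, h1⟩)
      ⟨P.start_mem_support, R.start_mem_support⟩
      ⟨Q.end_mem_support, R'.end_mem_support⟩
  -- segments inside P and Q
  obtain ⟨Pseg, hPsegP, hPsegS⟩ := exists_segment P hP hv.1 hu'.1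
  obtain ⟨Qseg, hQsegP, hQsegS⟩ := exists_segment Q hQ hv'.1 hu.2
  -- the long walk from v to u
  have hW : (Pseg.append (Walk.cons hu'v' Qseg)).IsPath := by
    rw [Walk.isPath_def, Walk.support_append, Walk.support_cons, List.tail_cons,
      List.nodup_append]
    exact ⟨hPsegP.support_nodup, hQsegP.support_nodup,
      fun a ha b hb hab => by subst hab; exact hPQ a (hPsegS ha) (hQsegS hb)⟩
  have hE : (Walk.cons huv.symm (Walk.nil : G.Walk u u)).IsPath := by
    rw [Walk.cons_isPath_iff]
    refine ⟨Walk.IsPath.nil, ?_⟩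
    simp only [Walk.support_nil, List.mem_singleton]
    intro h; subst h; exact hPQ v hv.1 hu.2
  have heq : (⟨_, hW⟩ : G.Path v u) = ⟨_, hE⟩ := hac.path_unique _ _
  have hsupp : (Pseg.append (Walk.cons hu'v' Qseg)).support
      = (Walk.cons huv.symm (Walk.nil : G.Walk u u)).support :=
    congrArg (fun r : G.Path v u => (r : G.Walk v u).support) heq
  have hu'mem : u' ∈ (Pseg.append (Walk.cons hu'v' Qseg)).support :=
    Walk.subset_support_append_left _ _ Pseg.end_mem_support
  rw [hsupp] at hu'mem
  simp only [Walk.support_cons, Walk.support_nil, List.mem_cons,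
    List.mem_singleton, List.not_mem_nil, or_false] at hu'mem
  rcases hu'mem with h | h
  · subst h; exact hRR' u' hu'.2 hv.2
  · subst h; exact hPQ u' hu'.1 hu.2

lemma exists_chain (f : ℕ → V) (p : ∀ i, G.Walk (f i) (f (i + 1))) :
    ∀ s : ℕ, 1 ≤ s → ∃ P : G.Walk (f 1) (f s), P.IsPath ∧
      ∀ v ∈ P.support, v = f 1 ∨ ∃ i, 1 ≤ i ∧ i < s ∧ v ∈ (p i).support := by
  intro s hs
  induction s with
  | zero => omega
  | succ n ih =>
    rcases Nat.lt_or_ge 1 (n + 1) with h1 | h1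
    · have hn : 1 ≤ n := by omega
      obtain ⟨P, hP, hsub⟩ := ih hn
      refine ⟨(P.append (p n)).bypass, Walk.bypass_isPath _, ?_⟩
      intro v hv
      have h := Walk.support_bypass_subset _ hv
      rw [Walk.mem_support_append_iff] at h
      rcases h with h | h
      · rcases hsub v h with h' | ⟨i, hi1, hi2, hi3⟩
        · exact Or.inl h'
        · exact Or.inr ⟨i, hi1, by omega, hi3⟩
      · exact Or.inr ⟨n, hn, by omega, h⟩
    · have hn : n = 0 := by omega
      subst hn
      exact ⟨Walk.nil, Walk.IsPath.nil, by simp⟩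

end Helpers

/-- for all s, t ≥ 2, `Q_{s,t}` is incompatible. -/
theorem Qst_incompatible (s t : ℕ) (hs : 2 ≤ s) (ht : 2 ≤ t) :
    ¬ QCompat (Lst s t) ↑(Qst s t) := by
  rintro ⟨T, hT⟩
  classical
  have hmemA : ∀ i : ℕ, (Sum.inl (min (max i 1) s) : ℕ ⊕ ℕ) ∈ Lst s t := by
    intro i
    exact Or.inl ⟨min (max i 1) s, ⟨by omega, by omega⟩, rfl⟩
  have hmemB : ∀ j : ℕ, (Sum.inr (min (max j 1) t) : ℕ ⊕ ℕ) ∈ Lst s t := by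
    intro j
    exact Or.inr ⟨min (max j 1) t, ⟨by omega, by omega⟩, rfl⟩
  set fA : ℕ → T.V := fun i => T.label ⟨Sum.inl (min (max i 1) s), hmemA i⟩ with hfA
  set fB : ℕ → T.V := fun j => T.label ⟨Sum.inr (min (max j 1) t), hmemB j⟩ with hfB
  -- choose paths between consecutive labeled vertices
  have hexA : ∀ i : ℕ, ∃ q : T.G.Walk (fA i) (fA (i + 1)), q.IsPath := fun i =>
    (T.isTree.isConnected.preconnected (fA i) (fA (i + 1))).elim
      (fun q => ⟨q.bypass, q.bypass_isPath⟩)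
  have hexB : ∀ j : ℕ, ∃ q : T.G.Walk (fB j) (fB (j + 1)), q.IsPath := fun j =>
    (T.isTree.isConnected.preconnected (fB j) (fB (j + 1))).elim
      (fun q => ⟨q.bypass, q.bypass_isPath⟩)
  choose pA hpA using hexA
  choose pB hpB using hexB
  -- the head quartet
  have hhead := hT (quartet (Sum.inl 1) (Sum.inr 1) (Sum.inl s) (Sum.inr t))
    (Finset.mem_coe.mpr (Finset.mem_insert_self _ _))
    (Sum.inl 1) (Sum.inr 1) (Sum.inl s) (Sum.inr t) rfl
  obtain ⟨hx, hy, hz, hw, P, Q, hPp, hQp, hPQ⟩ := hhead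
  -- the grid quartets
  have hgrid : ∀ i j : ℕ, 1 ≤ i → i < s → 1 ≤ j → j < t →
      T.displays4 (Sum.inl i) (Sum.inl (i + 1)) (Sum.inr j) (Sum.inr (j + 1)) := by
    intro i j hi1 hi2 hj1 hj2
    refine hT _ (Finset.mem_coe.mpr (Finset.mem_insert_of_mem
      (Finset.mem_image.mpr ⟨(i, j), ?_, rfl⟩))) _ _ _ _ rfl
    simp only [Finset.mem_product, Finset.mem_Ico]
    omega
  -- path uniqueness
  have huniq : ∀ {u v : T.V} (p q : T.G.Walk u v), p.IsPath → q.IsPath →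
      p.support ⊆ q.support := fun p q hp _ =>
    path_supp_subset T.isTree.IsAcyclic p q hp
  -- chains
  obtain ⟨RA, hRAp, hRAsub⟩ := exists_chain fA pA s (by omega)
  obtain ⟨RB, hRBp, hRBsub⟩ := exists_chain fB pB t (by omega)
  -- every vertex of RA lies on some pA i with 1 ≤ i < s
  have hRAsub' : ∀ v ∈ RA.support, ∃ i, 1 ≤ i ∧ i < s ∧ v ∈ (pA i).support := by
    intro v hv
    rcases hRAsub v hv with h | h
    · exact ⟨1, le_refl 1, by omega, h ▸ (pA 1).start_mem_support⟩
    · exact h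
  have hRBsub' : ∀ v ∈ RB.support, ∃ j, 1 ≤ j ∧ j < t ∧ v ∈ (pB j).support := by
    intro v hv
    rcases hRBsub v hv with h | h
    · exact ⟨1, le_refl 1, by omega, h ▸ (pB 1).start_mem_support⟩
    · exact h
  -- RA and RB are disjoint
  have hdisjAB : ∀ v ∈ RA.support, v ∉ RB.support := by
    intro v hvA hvB
    obtain ⟨i, hi1, hi2, hvi⟩ := hRAsub' v hvA
    obtain ⟨j, hj1, hj2, hvj⟩ := hRBsub' v hvB
    obtain ⟨hxi, hyi, hzj, hwj, pij, qij, hpij, hqij, hdisj⟩ := hgrid i j hi1 hi2 hj1 hj2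
    have eA1 : fA i = T.label ⟨Sum.inl i, hxi⟩ :=
      congrArg T.label (Subtype.ext (congrArg Sum.inl (by omega)))
    have eA2 : fA (i + 1) = T.label ⟨Sum.inl (i + 1), hyi⟩ :=
      congrArg T.label (Subtype.ext (congrArg Sum.inl (by omega)))
    have eB1 : fB j = T.label ⟨Sum.inr j, hzj⟩ :=
      congrArg T.label (Subtype.ext (congrArg Sum.inr (by omega)))
    have eB2 : fB (j + 1) = T.label ⟨Sum.inr (j + 1), hwj⟩ :=
      congrArg T.label (Subtype.ext (congrArg Sum.inr (by omega)))
    have h1 : v ∈ ((pA i).copy eA1 eA2).support := by rwa [Walk.support_copy]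
    have h2 : v ∈ ((pB j).copy eB1 eB2).support := by rwa [Walk.support_copy]
    have h1' : v ∈ pij.support :=
      huniq _ pij ((Walk.isPath_copy _ _ _).mpr (hpA i)) hpij h1
    have h2' : v ∈ qij.support :=
      huniq _ qij ((Walk.isPath_copy _ _ _).mpr (hpB j)) hqij h2
    exact hdisj v h1' h2'
  -- transport RA and RB to the right endpoints
  have eA1 : fA 1 = T.label ⟨Sum.inl 1, hx⟩ :=
    congrArg T.label (Subtype.ext (congrArg Sum.inl (by omega)))
  have eAs : fA s = T.label ⟨Sum.inl s, hz⟩ :=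
    congrArg T.label (Subtype.ext (congrArg Sum.inl (by omega)))
  have eB1 : fB 1 = T.label ⟨Sum.inr 1, hy⟩ :=
    congrArg T.label (Subtype.ext (congrArg Sum.inr (by omega)))
  have eBt : fB t = T.label ⟨Sum.inr t, hw⟩ :=
    congrArg T.label (Subtype.ext (congrArg Sum.inr (by omega)))
  refine quartet_exclusion T.isTree P Q (RA.copy eA1 eAs) (RB.copy eB1 eBt)
    hPp hQp ((Walk.isPath_copy _ _ _).mpr hRAp) ((Walk.isPath_copy _ _ _).mpr hRBp)
    hPQ ?_
  intro v hv1 hv2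
  rw [Walk.support_copy] at hv1 hv2
  exact hdisjAB v hv1 hv2
end
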